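/- Let q > 5 be an odd prime power and f a planar function on F_q with f(0) = 0 that is two-to-one on the nonzero elements. Then pres(f) > 2. -/

import Mathlib

open Finset

variable {G : Type*}

/-- Number of distinct values of `g`. -/
def V [Fintype G] [DecidableEq G] (g : G → G) : ℕ := (univ.image g).card

/-- Permutation resemblance of `f`. -/
noncomputable def pres [Fintype G] [DecidableEq G] [AddGroup G] (f : G → G) : ℕ :=
  sInf {n | ∃ g : G → G, Function.Bijective (fun x => g x + f x) ∧ V g = n}

/-- Uniformity of `f`: the maximal number of preimages of a point. -/
def uf [Fintype G] [DecidableEq G] (f : G → G) : ℕ :=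
  univ.sup fun b => (univ.filter fun x => f x = b).card

/-- `M f r`: number of elements with exactly `r` preimages under `f`. -/
def M [Fintype G] [DecidableEq G] (f : G → G) (r : ℕ) : ℕ :=
  (univ.filter fun b => (univ.filter fun x => f x = b).card = r).card

/-- `N f s`: number of `s`-tuples of pairwise distinct elements on which `f` is constant. -/
noncomputable def N [Fintype G] (f : G → G) (s : ℕ) : ℕ :=
  Nat.card {t : Fin s → G // Function.Injective t ∧ ∀ i j, f (t i) = f (t j)}

/-- For a planar function, the number of pairs `(x, y)` with `f x - f y = c` (with `c ≠ 0`)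
is exactly `q - 1`. -/
theorem planar_pairs_card {F : Type*} [Field F] [Fintype F] [DecidableEq F] (f : F → F)
    (hplanar : ∀ a : F, a ≠ 0 → Function.Bijective (fun x => f (x + a) - f x))
    (c : F) (hc : c ≠ 0) :
    (univ.filter fun p : F × F => f p.1 - f p.2 = c).card = Fintype.card F - 1 := by
  have ht : (univ.filter fun d : F => d ≠ 0).card = Fintype.card F - 1 := by
    rw [filter_ne', card_erase_of_mem (mem_univ 0), card_univ]
  rw [← ht]
  refine card_bij (fun p _ => p.1 - p.2) ?_ ?_ ?_
  · intro p hp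
    simp only [mem_filter, mem_univ, true_and] at hp ⊢
    intro h
    exact hc (by rw [← hp, sub_eq_zero.mp h, sub_self])
  · intro p hp q hq h
    simp only [mem_filter, mem_univ, true_and] at hp hq
    have hd : p.1 - p.2 ≠ 0 := by
      intro h'
      exact hc (by rw [← hp, sub_eq_zero.mp h', sub_self])
    have e1 : f (p.2 + (p.1 - p.2)) - f p.2 = c := by
      rw [show p.2 + (p.1 - p.2) = p.1 by ring]; exact hp
    have e2 : f (q.2 + (p.1 - p.2)) - f q.2 = c := by
      have h' : p.1 - p.2 = q.1 - q.2 := h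
      rw [h', show q.2 + (q.1 - q.2) = q.1 by ring]; exact hq
    have h2 : p.2 = q.2 := (hplanar _ hd).1 (e1.trans e2.symm)
    have h1 : p.1 = q.1 := by
      have h' : p.1 - p.2 = q.1 - q.2 := h
      rw [h2] at h'
      exact sub_left_inj.mp h'
    exact Prod.ext h1 h2
  · intro d hd
    simp only [mem_filter, mem_univ, true_and] at hd
    obtain ⟨y, hy⟩ := (hplanar d hd).2 c
    exact ⟨(y + d, y), by simpa using hy, by simp⟩

theorem stmt_16 {F : Type*} [Field F] [Fintype F] [DecidableEq F]
    (hq : Odd (Fintype.card F)) (hq5 : 5 < Fintype.card F) (f : F → F)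
    (hplanar : ∀ a : F, a ≠ 0 → Function.Bijective (fun x => f (x + a) - f x))
    (h0 : f 0 = 0)
    (h2to1 : ∀ x : F, x ≠ 0 → (univ.filter fun y => y ≠ 0 ∧ f y = f x).card = 2) :
    2 < pres f := by
  classical
  have hTne : {n | ∃ g : F → F, Function.Bijective (fun x => g x + f x) ∧ V g = n}.Nonempty := by
    refine ⟨V (fun x => x - f x), fun x => x - f x, ?_, rfl⟩
    have : (fun x => (x - f x) + f x) = id := by funext x; simp
    rw [this]; exact Function.bijective_id
  obtain ⟨g, hbij, hVg⟩ := Nat.sInf_mem hTne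
  unfold pres
  rw [← hVg]
  clear hVg hTne
  -- Goal: 2 < V g
  by_contra hle
  push_neg at hle
  -- extract the (at most) two values of g
  have himg : (univ.image g).Nonempty := by
    refine (Finset.image_nonempty).mpr ?_
    exact ⟨0, mem_univ 0⟩
  obtain ⟨a, b, hab, hmemab⟩ :
      ∃ a b : F, a ≠ b ∧ ∀ x, g x = a ∨ g x = b := by
    rcases Nat.lt_or_ge (univ.image g).card 2 with h | h
    · have hc1 : (univ.image g).card = 1 :=
        Nat.le_antisymm (by omega) himg.card_pos
      obtain ⟨a, ha⟩ := card_eq_one.mp hc1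
      refine ⟨a, a + 1, by simp, fun x => Or.inl ?_⟩
      have hx : g x ∈ univ.image g := mem_image_of_mem g (mem_univ x)
      rw [ha] at hx; simpa using hx
    · have h2 : (univ.image g).card = 2 := le_antisymm hle h
      obtain ⟨a, b, hab, hs⟩ := card_eq_two.mp h2
      refine ⟨a, b, hab, fun x => ?_⟩
      have hx : g x ∈ univ.image g := mem_image_of_mem g (mem_univ x)
      rw [hs] at hx; simpa using hx
  -- injectivity consequence of bijectivity of g + f
  have hinj : ∀ x y : F, g x = g y → f x = f y → x = y := by
    intro x y h1 h2
    exact hbij.1 (show g x + f x = g y + f y by rw [h1, h2])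
  -- every fiber of f has at most 2 elements
  have hfib : ∀ v : F, (univ.filter fun x => f x = v).card ≤ 2 := by
    intro v
    have hsub : (univ.filter fun x => f x = v) ⊆
        (univ.filter fun x => g x = a ∧ f x = v) ∪ (univ.filter fun x => g x = b ∧ f x = v) := by
      intro x hx
      simp only [mem_filter, mem_univ, true_and, mem_union] at hx ⊢
      rcases hmemab x with h | h
      · exact Or.inl ⟨h, hx⟩
      · exact Or.inr ⟨h, hx⟩
    have h1 : (univ.filter fun x => g x = a ∧ f x = v).card ≤ 1 := by
      refine card_le_one.mpr ?_
      intro x hx y hy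
      simp only [mem_filter, mem_univ, true_and] at hx hy
      exact hinj x y (hx.1.trans hy.1.symm) (hx.2.trans hy.2.symm)
    have h2 : (univ.filter fun x => g x = b ∧ f x = v).card ≤ 1 := by
      refine card_le_one.mpr ?_
      intro x hx y hy
      simp only [mem_filter, mem_univ, true_and] at hx hy
      exact hinj x y (hx.1.trans hy.1.symm) (hx.2.trans hy.2.symm)
    exact le_trans (card_le_card hsub) (le_trans (card_union_le _ _) (by omega))
  -- f x = 0 implies x = 0
  have hzero : ∀ x : F, f x = 0 → x = 0 := by
    intro x hx
    by_contra hx0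
    have h2 := h2to1 x hx0
    obtain ⟨y1, hy1⟩ := card_pos.mp (by rw [h2]; norm_num :
      0 < (univ.filter fun y => y ≠ 0 ∧ f y = f x).card)
    obtain ⟨y2, hy2, hne⟩ := exists_mem_ne (by rw [h2]; norm_num) y1
    simp only [mem_filter, mem_univ, true_and] at hy1 hy2
    have hsub : ({0, y1, y2} : Finset F) ⊆ univ.filter fun z => f z = 0 := by
      intro z hz
      simp only [mem_insert, mem_singleton] at hz
      simp only [mem_filter, mem_univ, true_and]
      rcases hz with h | h | h
      · rw [h]; exact h0
      · rw [h, hy1.2, hx]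
      · rw [h, hy2.2, hx]
    have hc3 : ({0, y1, y2} : Finset F).card = 3 := by
      rw [card_insert_of_notMem (by simp [Ne.symm hy1.1, Ne.symm hy2.1]),
        card_insert_of_notMem (by simpa using Ne.symm hne), card_singleton]
    have := card_le_card hsub
    rw [hc3] at this
    have := hfib 0
    omega
  -- each nonzero value of f is attained both on the g⁻¹(a) part and the g⁻¹(b) part
  have hsplit : ∀ v : F, v ≠ 0 → ∀ x : F, f x = v →
      (∃ xa, g xa = a ∧ f xa = v) ∧ (∃ xb, g xb = b ∧ f xb = v) := by
    intro v hv x hx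
    have hx0 : x ≠ 0 := fun h => hv (by rw [← hx, h, h0])
    have h2 := h2to1 x hx0
    obtain ⟨y1, hy1⟩ := card_pos.mp (by rw [h2]; norm_num :
      0 < (univ.filter fun y => y ≠ 0 ∧ f y = f x).card)
    obtain ⟨y2, hy2, hne⟩ := exists_mem_ne (by rw [h2]; norm_num) y1
    simp only [mem_filter, mem_univ, true_and] at hy1 hy2
    have hf1 : f y1 = v := hy1.2.trans hx
    have hf2 : f y2 = v := hy2.2.trans hx
    have hgne : g y1 ≠ g y2 := by
      intro h
      exact hne (hinj y2 y1 h.symm (hf2.trans hf1.symm))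
    rcases hmemab y1 with h1 | h1 <;> rcases hmemab y2 with h2' | h2'
    · exact absurd (h1.trans h2'.symm) hgne
    · exact ⟨⟨y1, h1, hf1⟩, ⟨y2, h2', hf2⟩⟩
    · exact ⟨⟨y2, h2', hf2⟩, ⟨y1, h1, hf1⟩⟩
    · exact absurd (h1.trans h2'.symm) hgne
  -- disjointness of shifted images
  have hdisj : ∀ xa xb : F, g xa = a → g xb = b → a + f xa ≠ b + f xb := by
    intro xa xb ha hb hEq
    have hxx : xa = xb := hbij.1 (show g xa + f xa = g xb + f xb by rw [ha, hb]; exact hEq)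
    exact hab (by rw [← ha, hxx, hb])
  -- key: any pair with f x - f y = b - a must involve 0
  have key : ∀ x y : F, f x - f y = b - a → x = 0 ∨ y = 0 := by
    intro x y hxy
    by_contra h
    push_neg at h
    have hfx : f x ≠ 0 := fun hh => h.1 (hzero x hh)
    have hfy : f y ≠ 0 := fun hh => h.2 (hzero y hh)
    obtain ⟨⟨xa, hga, hfa⟩, -⟩ := hsplit (f x) hfx x rfl
    obtain ⟨-, ⟨yb, hgb, hfb⟩⟩ := hsplit (f y) hfy y rfl
    apply hdisj xa yb hga hgb
    rw [hfa, hfb]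
    linear_combination hxy
  -- final counting
  have hc : b - a ≠ 0 := sub_ne_zero.mpr (Ne.symm hab)
  have hqm1 := planar_pairs_card f hplanar (b - a) hc
  have hsubT : (univ.filter fun p : F × F => f p.1 - f p.2 = b - a) ⊆
      (univ.filter fun p : F × F => p.1 = 0 ∧ f p.2 = -(b - a)) ∪
      (univ.filter fun p : F × F => p.2 = 0 ∧ f p.1 = b - a) := by
    intro p hp
    simp only [mem_filter, mem_univ, true_and, mem_union] at hp ⊢
    rcases key p.1 p.2 hp with h | h
    · rw [h, h0] at hp
      exact Or.inl ⟨h, by linear_combination -hp⟩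
    · rw [h, h0] at hp
      exact Or.inr ⟨h, by linear_combination hp⟩
  have hU1 : (univ.filter fun p : F × F => p.1 = 0 ∧ f p.2 = -(b - a)).card ≤ 2 := by
    refine le_trans (card_le_card_of_injOn (fun p => p.2) ?_ ?_) (hfib (-(b - a)))
    · intro p hp
      simp only [mem_coe, mem_filter, mem_univ, true_and] at hp ⊢
      exact hp.2
    · intro p hp q hq h
      simp only [coe_filter, Set.mem_setOf_eq, mem_univ, true_and] at hp hq
      exact Prod.ext (hp.1.trans hq.1.symm) h
  have hU2 : (univ.filter fun p : F × F => p.2 = 0 ∧ f p.1 = b - a).card ≤ 2 := by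
    refine le_trans (card_le_card_of_injOn (fun p => p.1) ?_ ?_) (hfib (b - a))
    · intro p hp
      simp only [mem_coe, mem_filter, mem_univ, true_and] at hp ⊢
      exact hp.2
    · intro p hp q hq h
      simp only [coe_filter, Set.mem_setOf_eq, mem_univ, true_and] at hp hq
      exact Prod.ext h (hp.1.trans hq.1.symm)
  have hle4 : (univ.filter fun p : F × F => f p.1 - f p.2 = b - a).card ≤ 4 := by
    exact le_trans (card_le_card hsubT) (le_trans (card_union_le _ _) (by omega))
  rw [hqm1] at hle4
  omega
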